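/- Under Algorithm 1, from configuration Conf BW-MR the execution achieves gathering: all robots eventually occupy a single node and remain there forever. -/

import Mathlib

set_option autoImplicit false

/-! ### Luminous myopic robots on an anonymous ring: basic model -/

/-- A configuration of `R` luminous robots with light colors in `C`
on an anonymous ring with `N` nodes (the nodes are `ZMod N`). -/
structure Config (N R : ℕ) (C : Type) where
  pos : Fin R → ZMod N
  light : Fin R → C

namespace Gathering

variable {N R : ℕ} {C : Type}

/-- The set of light colors present at node `u`. -/
def colorsAt (cfg : Config N R C) (u : ZMod N) : Set C :=
  {c | ∃ r, cfg.pos r = u ∧ cfg.light r = c}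

/-- Node `u` hosts at least one robot. -/
def occupiedNode (cfg : Config N R C) (u : ZMod N) : Prop :=
  ∃ r, cfg.pos r = u

/-- The view from node `u` with visibility range `φ`, in orientation `dir`:
the set of colors at signed offset `k`, for `|k| ≤ φ` (and `∅` beyond the range). -/
def nodeView (φ : ℕ) (cfg : Config N R C) (u : ZMod N) (dir : Bool) : ℤ → Set C :=
  fun k => if |k| ≤ (φ : ℤ) then
      colorsAt cfg (u + (if dir then (k : ZMod N) else ((-k : ℤ) : ZMod N)))
    else ∅

/-- Node `u` is a border node: it is occupied, all `φ` nodes on one side are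
empty, and some node within distance `φ` on the other side is occupied. -/
def isBorderNode (φ : ℕ) (cfg : Config N R C) (u : ZMod N) : Prop :=
  occupiedNode cfg u ∧
  ∃ dir : Bool,
    (∀ k : ℤ, 1 ≤ k → k ≤ (φ : ℤ) →
      ¬ occupiedNode cfg (u + (if dir then (k : ZMod N) else ((-k : ℤ) : ZMod N)))) ∧
    (∃ k : ℤ, 1 ≤ k ∧ k ≤ (φ : ℤ) ∧
      occupiedNode cfg (u + (if dir then ((-k : ℤ) : ZMod N) else (k : ZMod N))))

/-- Robot `r` is a border robot. -/
def isBorderRobot (φ : ℕ) (cfg : Config N R C) (r : Fin R) : Prop :=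
  isBorderNode φ cfg (cfg.pos r)

/-- The borders of a configuration: an occupied node together with a direction
in which the next `φ` nodes are all empty (their number is always even). -/
def borderPairs (φ : ℕ) (cfg : Config N R C) : Set (ZMod N × Bool) :=
  {p | occupiedNode cfg p.1 ∧
    ∀ k : ℤ, 1 ≤ k → k ≤ (φ : ℤ) →
      ¬ occupiedNode cfg (p.1 + (if p.2 then (k : ZMod N) else ((-k : ℤ) : ZMod N)))}

/-- Ring distance between two nodes. -/
def ringDist (u v : ZMod N) : ℕ := min (u - v).val (v - u).val

/-- Robots `r` and `r'` can observe each other. -/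
def canSee (φ : ℕ) (cfg : Config N R C) (r r' : Fin R) : Prop :=
  ringDist (cfg.pos r) (cfg.pos r') ≤ φ

/-- The visibility graph of the configuration is connected. -/
def VisConnected (φ : ℕ) (cfg : Config N R C) : Prop :=
  ∀ r r' : Fin R, Relation.ReflTransGen (canSee φ cfg) r r'

/-- The span of a configuration: the least `m` such that all occupied nodes fit
in a window of `m + 1` consecutive nodes.  In a configuration with exactly two
borders this is the distance `D` between the two border nodes. -/
noncomputable def spanDist (cfg : Config N R C) : ℕ :=
  sInf {m : ℕ | ∃ b : ZMod N, ∀ u, occupiedNode cfg u → ∃ i : ℕ, i ≤ m ∧ u = b + (i : ZMod N)}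

/-! ### Algorithms and asynchronous executions -/

/-- A deterministic algorithm for luminous robots in the full-light model:
given the robot's own color and its (oriented) view, output a new color and a
movement (`+1`, `0` or `-1`, relative to the orientation of the view). -/
structure Algo (C : Type) where
  out : C → (ℤ → Set C) → C × SignType

/-- The destination of a movement `m` from node `u`, for view orientation `dir`. -/
def moveTarget (u : ZMod N) (dir : Bool) (m : SignType) : ZMod N :=
  u + (if dir then ((m : ℤ) : ZMod N) else ((-(m : ℤ) : ℤ) : ZMod N))

/-- An execution of algorithm `A` under a fair asynchronous scheduler.
At each instant every robot either stays idle, performs a Look (together with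
the deterministic Compute, recording a plan: a new color and a destination
node; the orientation of the snapshot is chosen adversarially, as robots are
disoriented), becomes visible with its new color (end of the Compute phase,
keeping its pending plan), or performs its atomic Move, completing the cycle.
A robot `r` with `plan t r ≠ none` is a robot whose view may be outdated. -/
structure AsyncExec (N R : ℕ) (C : Type) (φ : ℕ) (A : Algo C) where
  cfg : ℕ → Config N R C
  plan : ℕ → Fin R → Option (C × ZMod N)
  init_plan : ∀ r, plan 0 r = none
  step : ∀ (t : ℕ) (r : Fin R),
      ((cfg (t+1)).pos r = (cfg t).pos r ∧ (cfg (t+1)).light r = (cfg t).light r ∧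
        plan (t+1) r = plan t r)
    ∨ (plan t r = none ∧ (cfg (t+1)).pos r = (cfg t).pos r ∧
        (cfg (t+1)).light r = (cfg t).light r ∧
        ∃ dir : Bool,
          plan (t+1) r =
            some ((A.out ((cfg t).light r) (nodeView φ (cfg t) ((cfg t).pos r) dir)).1,
              moveTarget ((cfg t).pos r) dir
                (A.out ((cfg t).light r) (nodeView φ (cfg t) ((cfg t).pos r) dir)).2))
    ∨ (∃ c u, plan t r = some (c, u) ∧ (cfg (t+1)).pos r = (cfg t).pos r ∧
        (cfg (t+1)).light r = c ∧ plan (t+1) r = some (c, u))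
    ∨ (∃ c u, plan t r = some (c, u) ∧ (cfg (t+1)).pos r = u ∧
        (cfg (t+1)).light r = c ∧ plan (t+1) r = none)
  fair : ∀ (r : Fin R) (t : ℕ), ∃ t', t ≤ t' ∧ plan t' r ≠ none ∧ plan (t'+1) r = none

/-- The execution achieves gathering: from some time on, all robots occupy a
single node and remain there forever. -/
def AchievesGathering {N R : ℕ} {C : Type} {φ : ℕ} {A : Algo C}
    (e : AsyncExec N R C φ A) : Prop :=
  ∃ (t : ℕ) (u : ZMod N), ∀ t', t ≤ t' → ∀ r, (e.cfg t').pos r = u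

/-! ### Initial configurations -/

/-- The robots occupy a segment `G'` of `Minit` nodes with base (border) node
`b`: both endpoints of the segment are occupied and are borders (the `φ` nodes
beyond each endpoint are empty), every occupied node lies in the segment,
consecutive occupied nodes are at distance at most `φ` (`H_init ≤ φ`, i.e. the
visibility graph is connected), and `Oinit` is the number of occupied nodes of
the segment. -/
def SegmentInitOn (φ : ℕ) (cfg : Config N R C) (b : ZMod N) (Minit Oinit : ℕ) : Prop :=
  2 ≤ Minit ∧
  occupiedNode cfg b ∧ occupiedNode cfg (b + ((Minit - 1 : ℕ) : ZMod N)) ∧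
  (∀ u, occupiedNode cfg u → ∃ i : ℕ, i < Minit ∧ u = b + (i : ZMod N)) ∧
  (∀ k : ℕ, 1 ≤ k → k ≤ φ →
    ¬ occupiedNode cfg (b - (k : ZMod N)) ∧
    ¬ occupiedNode cfg (b + ((Minit - 1 : ℕ) : ZMod N) + (k : ZMod N))) ∧
  (∀ i : ℕ, i + 1 < Minit → occupiedNode cfg (b + (i : ZMod N)) →
    ∃ j : ℕ, i < j ∧ j ≤ i + φ ∧ j < Minit ∧ occupiedNode cfg (b + (j : ZMod N))) ∧
  Oinit = {i : Fin Minit | occupiedNode cfg (b + ((i : ℕ) : ZMod N))}.ncard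

/-- Admissible initial configuration: all robots have the color `white`, and
the robots occupy a segment with two borders and connected visibility graph. -/
def AdmissibleInit (φ : ℕ) (cfg : Config N R C) (white : C) (Minit Oinit : ℕ) : Prop :=
  (∀ r, cfg.light r = white) ∧ ∃ b : ZMod N, SegmentInitOn φ cfg b Minit Oinit

/-! ### Edge-view symmetry and cautiousness -/

/-- Robots `r1` and `r2` are indistinguishable: they have the same color and
the same view (up to reversal, as robots are disoriented). -/
def viewsEq (φ : ℕ) (cfg : Config N R C) (r1 r2 : Fin R) : Prop :=
  cfg.light r1 = cfg.light r2 ∧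
  (nodeView φ cfg (cfg.pos r1) true = nodeView φ cfg (cfg.pos r2) true ∨
   nodeView φ cfg (cfg.pos r1) true = nodeView φ cfg (cfg.pos r2) false)

/-- Definition 20: a configuration is edge-view-symmetric if at least two
distinct nodes host robots and there is an edge `(u_i, u_{i+1})` such that for
every `k ≥ 0`, every robot at `u_{i-k}` has an indistinguishable counterpart at
`u_{i+k+1}`. -/
def EdgeViewSymmetric (φ : ℕ) (cfg : Config N R C) : Prop :=
  (∃ u v : ZMod N, u ≠ v ∧ occupiedNode cfg u ∧ occupiedNode cfg v) ∧
  ∃ i : ZMod N, ∀ (k : ℕ) (r1 : Fin R), cfg.pos r1 = i - (k : ZMod N) →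
    ∃ r2 : Fin R, cfg.pos r2 = i + (k : ZMod N) + 1 ∧ viewsEq φ cfg r1 r2

/-- Definition 23: an algorithm is cautious if robots only ever move toward
other occupied nodes (they never expand the span of the visibility graph). -/
def Cautious (φ : ℕ) (A : Algo C) : Prop :=
  ∀ (c : C) (v : ℤ → Set C),
    ((A.out c v).2 = 1 → ∃ k : ℤ, 1 ≤ k ∧ k ≤ (φ : ℤ) ∧ v k ≠ ∅) ∧
    ((A.out c v).2 = -1 → ∃ k : ℤ, 1 ≤ k ∧ k ≤ (φ : ℤ) ∧ v (-k) ≠ ∅)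

end Gathering

namespace Gathering

/-! ### Algorithm 1 (three colors) -/

/-- The three light colors of Algorithm 1. -/
inductive C3 : Type
  | White
  | Red
  | Blue
deriving DecidableEq

open Classical in
/-- The rules of Algorithm 1, for a view oriented so that the `φ` nodes at
negative offsets are empty (the observing robot is a border robot and the
positive direction points inward), in priority order
R1, R2a, R2b, R3a, R3b, R4a, R4b, R5. -/
noncomputable def algo1Rules (φ : ℕ) (c : C3) (v : ℤ → Set C3) : C3 × SignType :=
  -- R1 : ∅^φ [W!] (¬∅^φ)  ::  R
  if c = C3.White ∧ v 0 = {C3.White} then (C3.Red, 0)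
  -- R2a : ∅^φ [R!] (∅, B!) (¬(∅^(φ-1)))  ::  B, →
  else if c = C3.Red ∧ v 0 = {C3.Red} ∧ (v 1 = ∅ ∨ v 1 = {C3.Blue}) ∧
      ¬ (∀ k : ℤ, 2 ≤ k → k ≤ (φ : ℤ) → v k = ∅) then (C3.Blue, 1)
  -- R2b : ∅^φ [R!] (W) (?^(φ-1))  ::  B, →
  else if c = C3.Red ∧ v 0 = {C3.Red} ∧ C3.White ∈ v 1 ∧
      (∀ k : ℤ, 2 ≤ k → k ≤ (φ : ℤ) → v k ≠ ∅) then (C3.Blue, 1)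
  -- R3a : ∅^φ [B!] (∅, R!) (¬(∅^(φ-1)))  ::  R, →
  else if c = C3.Blue ∧ v 0 = {C3.Blue} ∧ (v 1 = ∅ ∨ v 1 = {C3.Red}) ∧
      ¬ (∀ k : ℤ, 2 ≤ k → k ≤ (φ : ℤ) → v k = ∅) then (C3.Red, 1)
  -- R3b : ∅^φ [B!] (W) (?^(φ-1))  ::  R, →
  else if c = C3.Blue ∧ v 0 = {C3.Blue} ∧ C3.White ∈ v 1 ∧
      (∀ k : ℤ, 2 ≤ k → k ≤ (φ : ℤ) → v k ≠ ∅) then (C3.Red, 1)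
  -- R4a : ∅^φ [R [W]] (¬∅^φ)  ::  R
  else if c = C3.White ∧ C3.Red ∈ v 0 then (C3.Red, 0)
  -- R4b : ∅^φ [B [W]] (¬∅^φ)  ::  B
  else if c = C3.White ∧ C3.Blue ∈ v 0 then (C3.Blue, 0)
  -- R5 : ∅^φ [R!] (B!) (∅^(φ-1))  ::  B, →
  else if c = C3.Red ∧ v 0 = {C3.Red} ∧ v 1 = {C3.Blue} ∧
      (∀ k : ℤ, 2 ≤ k → k ≤ (φ : ℤ) → v k = ∅) then (C3.Blue, 1)
  else (c, 0)

open Classical in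
/-- Algorithm 1: the rules are applied in the orientation in which the `φ`
nearest nodes on one side are all empty.  A robot seeing no other robot does
nothing (rule R0), and no rule is enabled for a non-border robot. -/
noncomputable def algo1 (φ : ℕ) : Algo C3 where
  out := fun c v =>
    if (∀ k : ℤ, 1 ≤ k → k ≤ (φ : ℤ) → v (-k) = ∅) ∧
       (∀ k : ℤ, 1 ≤ k → k ≤ (φ : ℤ) → v k = ∅) then (c, 0)
    else if ∀ k : ℤ, 1 ≤ k → k ≤ (φ : ℤ) → v (-k) = ∅ then algo1Rules φ c v
    else if ∀ k : ℤ, 1 ≤ k → k ≤ (φ : ℤ) → v k = ∅ then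
      ((algo1Rules φ c (fun k => v (-k))).1, -(algo1Rules φ c (fun k => v (-k))).2)
    else (c, 0)

/-! ### Algorithm 2 (four colors) -/

/-- The four light colors of Algorithm 2. -/
inductive C4 : Type
  | White
  | Red
  | Blue
  | Purple
deriving DecidableEq

open Classical in
/-- The rules of Algorithm 2, for a view oriented so that the `φ` nodes at
negative offsets are empty, in priority order
R1, R2a-1, R2a-2, R2b, R3a-1, R3a-2, R3b, R4a, R4b, R5a, R5b-1, R5b-2, R5b-3. -/
noncomputable def algo2Rules (φ : ℕ) (c : C4) (v : ℤ → Set C4) : C4 × SignType :=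
  -- R1 : ∅^φ [W!] (¬∅^φ)  ::  R
  if c = C4.White ∧ v 0 = {C4.White} then (C4.Red, 0)
  -- R2a-1 : ∅^φ [R!] (∅) (¬(∅^(φ-1)))  ::  →
  else if c = C4.Red ∧ v 0 = {C4.Red} ∧ v 1 = ∅ ∧
      ¬ (∀ k : ℤ, 2 ≤ k → k ≤ (φ : ℤ) → v k = ∅) then (C4.Red, 1)
  -- R2a-2 : ∅^φ [R!] (¬W, R) (¬(∅^(φ-1)))  ::  →
  else if c = C4.Red ∧ v 0 = {C4.Red} ∧ (C4.Red ∈ v 1 ∧ C4.White ∉ v 1) ∧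
      ¬ (∀ k : ℤ, 2 ≤ k → k ≤ (φ : ℤ) → v k = ∅) then (C4.Red, 1)
  -- R2b : ∅^φ [R!] (W) (?^(φ-1))  ::  B, →
  else if c = C4.Red ∧ v 0 = {C4.Red} ∧ C4.White ∈ v 1 ∧
      (∀ k : ℤ, 2 ≤ k → k ≤ (φ : ℤ) → v k ≠ ∅) then (C4.Blue, 1)
  -- R3a-1 : ∅^φ [B!] (∅) (¬(∅^(φ-1)))  ::  →
  else if c = C4.Blue ∧ v 0 = {C4.Blue} ∧ v 1 = ∅ ∧
      ¬ (∀ k : ℤ, 2 ≤ k → k ≤ (φ : ℤ) → v k = ∅) then (C4.Blue, 1)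
  -- R3a-2 : ∅^φ [B!] (¬W, B) (¬(∅^(φ-1)))  ::  →
  else if c = C4.Blue ∧ v 0 = {C4.Blue} ∧ (C4.Blue ∈ v 1 ∧ C4.White ∉ v 1) ∧
      ¬ (∀ k : ℤ, 2 ≤ k → k ≤ (φ : ℤ) → v k = ∅) then (C4.Blue, 1)
  -- R3b : ∅^φ [B!] (W) (?^(φ-1))  ::  R, →
  else if c = C4.Blue ∧ v 0 = {C4.Blue} ∧ C4.White ∈ v 1 ∧
      (∀ k : ℤ, 2 ≤ k → k ≤ (φ : ℤ) → v k ≠ ∅) then (C4.Red, 1)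
  -- R4a : ∅^φ [R [W]] (¬∅^φ)  ::  R
  else if c = C4.White ∧ C4.Red ∈ v 0 then (C4.Red, 0)
  -- R4b : ∅^φ [B [W]] (¬∅^φ)  ::  B
  else if c = C4.White ∧ C4.Blue ∈ v 0 then (C4.Blue, 0)
  -- R5a : ∅^φ [?] (P) (∅^(φ-1))  ::  →
  else if C4.Purple ∈ v 1 ∧ (∀ k : ℤ, 2 ≤ k → k ≤ (φ : ℤ) → v k = ∅) then (c, 1)
  -- R5b-1 : ∅^φ [B!] (R!) (∅^(φ-1))  ::  P
  else if c = C4.Blue ∧ v 0 = {C4.Blue} ∧ v 1 = {C4.Red} ∧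
      (∀ k : ℤ, 2 ≤ k → k ≤ (φ : ℤ) → v k = ∅) then (C4.Purple, 0)
  -- R5b-2 : ∅^φ [B!] (R, B) (∅^(φ-1))  ::  P
  else if c = C4.Blue ∧ v 0 = {C4.Blue} ∧ (C4.Red ∈ v 1 ∧ C4.Blue ∈ v 1) ∧
      (∀ k : ℤ, 2 ≤ k → k ≤ (φ : ℤ) → v k = ∅) then (C4.Purple, 0)
  -- R5b-3 : ∅^φ [R [B]] (R!) (∅^(φ-1))  ::  P
  else if c = C4.Blue ∧ C4.Red ∈ v 0 ∧ v 1 = {C4.Red} ∧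
      (∀ k : ℤ, 2 ≤ k → k ≤ (φ : ℤ) → v k = ∅) then (C4.Purple, 0)
  else (c, 0)

open Classical in
/-- Algorithm 2: the rules are applied in the orientation in which the `φ`
nearest nodes on one side are all empty.  A robot seeing no other robot does
nothing (rule R0), and no rule is enabled for a non-border robot. -/
noncomputable def algo2 (φ : ℕ) : Algo C4 where
  out := fun c v =>
    if (∀ k : ℤ, 1 ≤ k → k ≤ (φ : ℤ) → v (-k) = ∅) ∧
       (∀ k : ℤ, 1 ≤ k → k ≤ (φ : ℤ) → v k = ∅) then (c, 0)
    else if ∀ k : ℤ, 1 ≤ k → k ≤ (φ : ℤ) → v (-k) = ∅ then algo2Rules φ c v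
    else if ∀ k : ℤ, 1 ≤ k → k ≤ (φ : ℤ) → v k = ∅ then
      ((algo2Rules φ c (fun k => v (-k))).1, -(algo2Rules φ c (fun k => v (-k))).2)
    else (c, 0)

/-- `#O_W`: the number of nodes hosting a White robot that are not border
nodes. -/
noncomputable def numWhiteNonBorder {N R : ℕ} (φ : ℕ) (cfg : Config N R C4) : ℕ :=
  {u : ZMod N | C4.White ∈ colorsAt cfg u ∧ ¬ isBorderNode φ cfg u}.ncard

end Gathering

namespace Gathering

/-- Configuration `Conf BW-MR` (with `D = 1`): one border node `u` contains
Blue robots and possibly White robots, all without outdated views; the other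
border node `v` contains Red robots and possibly Blue robots, where a robot of
`v` either has no outdated view (and is then Red) or has a pending plan to
change its color to Blue and move to `u`. -/
def ConfBWMR {N R φ : ℕ} {A : Algo C3} (e : AsyncExec N R C3 φ A) (t : ℕ) : Prop :=
  ∃ u v : ZMod N, (v = u + 1 ∨ v = u - 1) ∧
    isBorderNode φ (e.cfg t) u ∧ isBorderNode φ (e.cfg t) v ∧
    (∀ w, occupiedNode (e.cfg t) w → w = u ∨ w = v) ∧
    (∀ r, (e.cfg t).pos r = u →
      ((e.cfg t).light r = C3.Blue ∨ (e.cfg t).light r = C3.White) ∧ e.plan t r = none) ∧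
    C3.Blue ∈ colorsAt (e.cfg t) u ∧
    (∀ r, (e.cfg t).pos r = v →
      ((e.cfg t).light r = C3.Red ∨ (e.cfg t).light r = C3.Blue) ∧
      (e.plan t r = none ∨ e.plan t r = some (C3.Blue, u)) ∧
      (e.plan t r = none → (e.cfg t).light r = C3.Red)) ∧
    C3.Red ∈ colorsAt (e.cfg t) v

/-- Configuration `Conf RW-MB` (with `D = 1`): one border node `u` contains
Red robots and possibly White robots, all without outdated views; the other
border node `v` contains Blue robots and possibly Red robots, where a robot of
`v` either has no outdated view (and is then Blue) or has a pending plan to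
change its color to Red and move to `u`. -/
def ConfRWMB {N R φ : ℕ} {A : Algo C3} (e : AsyncExec N R C3 φ A) (t : ℕ) : Prop :=
  ∃ u v : ZMod N, (v = u + 1 ∨ v = u - 1) ∧
    isBorderNode φ (e.cfg t) u ∧ isBorderNode φ (e.cfg t) v ∧
    (∀ w, occupiedNode (e.cfg t) w → w = u ∨ w = v) ∧
    (∀ r, (e.cfg t).pos r = u →
      ((e.cfg t).light r = C3.Red ∨ (e.cfg t).light r = C3.White) ∧ e.plan t r = none) ∧
    C3.Red ∈ colorsAt (e.cfg t) u ∧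
    (∀ r, (e.cfg t).pos r = v →
      ((e.cfg t).light r = C3.Red ∨ (e.cfg t).light r = C3.Blue) ∧
      (e.plan t r = none ∨ e.plan t r = some (C3.Red, u)) ∧
      (e.plan t r = none → (e.cfg t).light r = C3.Blue)) ∧
    C3.Blue ∈ colorsAt (e.cfg t) v

end Gathering


namespace Gathering

section Lem7

variable {N R phi : ℕ}

private lemma castZ_ne_zero (hN : 3 ≤ N) {j : ℤ} (h0 : j ≠ 0) (hlt : |j| < N) :
    ((j : ℤ) : ZMod N) ≠ 0 := by
  haveI : NeZero N := ⟨by omega⟩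
  rw [Ne, ZMod.intCast_zmod_eq_zero_iff_dvd]
  intro hdvd
  have h1 : (N:ℤ) ≤ |j| := Int.le_of_dvd (abs_pos.mpr h0) ((dvd_abs _ _).mpr hdvd)
  omega

private lemma colorsAt_empty_iff {C : Type} (cfg : Config N R C) (w : ZMod N) :
    colorsAt cfg w = ∅ ↔ ¬ occupiedNode cfg w := by
  constructor
  · rintro h ⟨r, hr⟩
    have : cfg.light r ∈ colorsAt cfg w := ⟨r, hr, rfl⟩
    simp [h] at this
  · intro h
    ext c
    simp only [colorsAt, Set.mem_setOf_eq, Set.mem_empty_iff_false, iff_false]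
    rintro ⟨r, hr, -⟩
    exact h ⟨r, hr⟩

/-- canonical local view at node `w` with sole occupied neighbour `z` at offset `1`. -/
private def Vloc (cfg : Config N R C3) (w z : ZMod N) : ℤ → Set C3 :=
  fun k => if k = 0 then colorsAt cfg w else if k = 1 then colorsAt cfg z else ∅

private lemma Vloc_zero (cfg : Config N R C3) (w z : ZMod N) :
    Vloc cfg w z 0 = colorsAt cfg w := rfl

private lemma Vloc_one (cfg : Config N R C3) (w z : ZMod N) :
    Vloc cfg w z 1 = colorsAt cfg z := rfl

private lemma Vloc_other (cfg : Config N R C3) (w z : ZMod N) {k : ℤ}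
    (h0 : k ≠ 0) (h1 : k ≠ 1) : Vloc cfg w z k = ∅ := by
  rw [Vloc, if_neg h0, if_neg h1]

private lemma Vloc_allEmpty (cfg : Config N R C3) (w z : ZMod N) :
    ∀ k : ℤ, 2 ≤ k → k ≤ (phi:ℤ) → Vloc cfg w z k = ∅ := fun k h2 _ =>
  Vloc_other cfg w z (by omega) (by omega)

private lemma Vloc_negEmpty (cfg : Config N R C3) (w z : ZMod N) :
    ∀ k : ℤ, 1 ≤ k → k ≤ (phi:ℤ) → Vloc cfg w z (-k) = ∅ := fun k h1 _ =>
  Vloc_other cfg w z (by omega) (by omega)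

private lemma rules_snd (c : C3) (v : ℤ → Set C3) :
    (algo1Rules phi c v).2 = 0 ∨ (algo1Rules phi c v).2 = 1 := by
  unfold algo1Rules; split_ifs <;> simp

private lemma algo1_out_pos (hphi : 1 ≤ phi) (cfg : Config N R C3) (w z : ZMod N)
    (hz : colorsAt cfg z ≠ ∅) (c : C3) :
    (algo1 phi).out c (Vloc cfg w z) = algo1Rules phi c (Vloc cfg w z) := by
  have h1 : (1:ℤ) ≤ (phi:ℤ) := by exact_mod_cast hphi
  have hne : ¬ ((∀ k : ℤ, 1 ≤ k → k ≤ (phi:ℤ) → Vloc cfg w z (-k) = ∅) ∧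
      (∀ k : ℤ, 1 ≤ k → k ≤ (phi:ℤ) → Vloc cfg w z k = ∅)) := by
    rintro ⟨-, h⟩
    exact hz (by simpa [Vloc_one] using h 1 le_rfl h1)
  simp only [algo1]
  rw [if_neg hne, if_pos (Vloc_negEmpty cfg w z)]

private lemma algo1_out_neg (hphi : 1 ≤ phi) (cfg : Config N R C3) (w z : ZMod N)
    (hz : colorsAt cfg z ≠ ∅) (c : C3) :
    (algo1 phi).out c (fun k => Vloc cfg w z (-k)) =
      ((algo1Rules phi c (Vloc cfg w z)).1, -(algo1Rules phi c (Vloc cfg w z)).2) := by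
  have h1 : (1:ℤ) ≤ (phi:ℤ) := by exact_mod_cast hphi
  have hval : ∀ k : ℤ, (fun k : ℤ => Vloc cfg w z (-k)) (-k) = Vloc cfg w z k := by
    intro k; simp
  have hne : ¬ ((∀ k : ℤ, 1 ≤ k → k ≤ (phi:ℤ) → (fun k : ℤ => Vloc cfg w z (-k)) (-k) = ∅) ∧
      (∀ k : ℤ, 1 ≤ k → k ≤ (phi:ℤ) → (fun k : ℤ => Vloc cfg w z (-k)) k = ∅)) := by
    rintro ⟨h, -⟩
    have := h 1 le_rfl h1
    rw [hval] at this
    exact hz (by simpa [Vloc_one] using this)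
  have hne2 : ¬ (∀ k : ℤ, 1 ≤ k → k ≤ (phi:ℤ) → (fun k : ℤ => Vloc cfg w z (-k)) (-k) = ∅) := by
    intro h
    have := h 1 le_rfl h1
    rw [hval] at this
    exact hz (by simpa [Vloc_one] using this)
  have hpos : ∀ k : ℤ, 1 ≤ k → k ≤ (phi:ℤ) → (fun k : ℤ => Vloc cfg w z (-k)) k = ∅ := by
    intro k hk1 hk2
    exact Vloc_negEmpty cfg w z k hk1 hk2
  simp only [algo1]
  rw [if_neg hne, if_neg hne2, if_pos hpos]
  have : (fun k : ℤ => (fun k : ℤ => Vloc cfg w z (-k)) (-k)) = Vloc cfg w z := by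
    funext k; simp
  rw [this]

private lemma rulesAtU (cfg : Config N R C3) (w z : ZMod N) (c : C3)
    (hc : c = C3.White ∨ c = C3.Blue)
    (hB : C3.Blue ∈ colorsAt cfg w)
    (hW : ∀ x ∈ colorsAt cfg w, x = C3.White ∨ x = C3.Blue)
    (hZ : ∀ x ∈ colorsAt cfg z, x = C3.Red ∨ x = C3.Blue) :
    algo1Rules phi c (Vloc cfg w z) = (C3.Blue, 0) := by
  have hall := Vloc_allEmpty (phi := phi) cfg w z
  unfold algo1Rules
  split_ifs with h1 h2 h3 h4 h5 h6 h7 h8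
  · exfalso; rw [← Vloc_zero cfg w z, h1.2] at hB; simp at hB
  · exfalso; rcases hc with rfl | rfl <;> simp at h2
  · exfalso; rcases hc with rfl | rfl <;> simp at h3
  · exact absurd hall h4.2.2.2
  · exfalso
    have := hZ _ (by rw [← Vloc_one cfg w z]; exact h5.2.2.1)
    simp at this
  · exfalso
    have := hW _ (by rw [← Vloc_zero cfg w z]; exact h6.2)
    simp at this
  · rfl
  · exfalso; rcases hc with rfl | rfl <;> simp at h8
  · rcases hc with rfl | rfl
    · exact absurd ⟨rfl, by rw [Vloc_zero]; exact hB⟩ h7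
    · rfl

private lemma rulesAtV_cases (cfg : Config N R C3) (w z : ZMod N) :
    algo1Rules phi C3.Red (Vloc cfg w z) = (C3.Blue, 1) ∨
    algo1Rules phi C3.Red (Vloc cfg w z) = (C3.Red, 0) := by
  unfold algo1Rules
  split_ifs <;> first
    | exact Or.inl rfl
    | exact Or.inr rfl
    | simp_all

private lemma rulesAtV_fire (cfg : Config N R C3) (w z : ZMod N)
    (h0 : colorsAt cfg w = {C3.Red}) (h1 : colorsAt cfg z = {C3.Blue}) :
    algo1Rules phi C3.Red (Vloc cfg w z) = (C3.Blue, 1) := by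
  have hall := Vloc_allEmpty (phi := phi) cfg w z
  have hv0 : Vloc cfg w z 0 = {C3.Red} := by rw [Vloc_zero]; exact h0
  have hv1 : Vloc cfg w z 1 = {C3.Blue} := by rw [Vloc_one]; exact h1
  unfold algo1Rules
  rw [if_neg (fun g => absurd g.1 (by simp)), if_neg (fun g => g.2.2.2 hall),
    if_neg (fun g => by have := g.2.2.1; rw [hv1] at this; simp at this),
    if_neg (fun g => absurd g.1 (by simp)), if_neg (fun g => absurd g.1 (by simp)),
    if_neg (fun g => absurd g.1 (by simp)), if_neg (fun g => absurd g.1 (by simp)),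
    if_pos ⟨rfl, hv0, hv1, hall⟩]
private lemma out_eval (hN : 3 ≤ N) (hphi : 1 ≤ phi) (hpN : (phi:ℤ) + 2 ≤ (N:ℤ))
    (cfg : Config N R C3) (w z : ZMod N) (s : ℤ) (hs : s = 1 ∨ s = -1)
    (hz : z = w + ((s : ℤ) : ZMod N))
    (hocc : ∀ x, occupiedNode cfg x → x = w ∨ x = z)
    (hzocc : occupiedNode cfg z) (c : C3) (dir : Bool) :
    ((algo1 phi).out c (nodeView phi cfg w dir)).1 = (algo1Rules phi c (Vloc cfg w z)).1 ∧
    moveTarget w dir ((algo1 phi).out c (nodeView phi cfg w dir)).2 =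
      (if (algo1Rules phi c (Vloc cfg w z)).2 = 1 then z else w) := by
  have h1phi : (1:ℤ) ≤ (phi:ℤ) := by exact_mod_cast hphi
  have hznon : colorsAt cfg z ≠ ∅ := by
    rw [Ne, colorsAt_empty_iff]; exact not_not.mpr hzocc
  have habs : |s| = 1 := by rcases hs with rfl | rfl <;> simp
  have hnotocc : ∀ j : ℤ, j ≠ 0 → j ≠ s → |j| ≤ (phi:ℤ) →
      colorsAt cfg (w + ((j : ℤ) : ZMod N)) = ∅ := by
    intro j hj0 hjs hjp
    rw [colorsAt_empty_iff]
    intro hoc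
    rcases hocc _ hoc with h | h
    · have hc0 : ((j : ℤ) : ZMod N) = 0 := by rwa [add_eq_left] at h
      exact castZ_ne_zero hN hj0 (by omega) hc0
    · rw [hz] at h
      have hjs' : ((j : ℤ) : ZMod N) = ((s : ℤ) : ZMod N) := add_left_cancel h
      have hc0 : (((j - s) : ℤ) : ZMod N) = 0 := by push_cast; rw [hjs']; ring
      have habs2 : |j - s| ≤ |j| + |s| := by
        rw [sub_eq_add_neg]
        exact (abs_add_le j (-s)).trans_eq (by rw [abs_neg])
      exact castZ_ne_zero hN (sub_ne_zero.mpr hjs) (by omega) hc0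
  rcases hs with rfl | rfl
  · -- s = 1 : true-orientation view is Vloc
    have hVT : nodeView phi cfg w true = Vloc cfg w z := by
      funext k
      by_cases hk : |k| ≤ (phi:ℤ)
      · have hL : nodeView phi cfg w true k = colorsAt cfg (w + ((k:ℤ) : ZMod N)) := by
          simp [nodeView, hk]
        rw [hL]
        rcases eq_or_ne k 0 with rfl | hk0
        · rw [Vloc_zero]; norm_num
        rcases eq_or_ne k 1 with rfl | hk1
        · rw [Vloc_one, hz]
        · rw [Vloc_other cfg w z hk0 hk1, hnotocc k hk0 hk1 hk]
      · have hL : nodeView phi cfg w true k = ∅ := by simp [nodeView, hk]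
        have h0 : k ≠ 0 := by rintro rfl; exact hk (by rw [abs_zero]; omega)
        have h1 : k ≠ 1 := by rintro rfl; exact hk (by rw [abs_one]; omega)
        rw [hL, Vloc_other cfg w z h0 h1]
    cases dir
    · -- dir = false
      have hVF : nodeView phi cfg w false = fun k => Vloc cfg w z (-k) := by
        funext k
        have h : nodeView phi cfg w false k = nodeView phi cfg w true (-k) := by
          simp [nodeView, abs_neg]
        rw [h, hVT]
      rw [hVF, algo1_out_neg hphi cfg w z hznon]
      refine ⟨rfl, ?_⟩
      rcases rules_snd (phi := phi) c (Vloc cfg w z) with h | h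
      · rw [h, if_neg (by decide)]; simp [moveTarget]
      · rw [h, if_pos rfl]; simp [moveTarget, hz]
    · -- dir = true
      rw [hVT, algo1_out_pos hphi cfg w z hznon]
      refine ⟨rfl, ?_⟩
      rcases rules_snd (phi := phi) c (Vloc cfg w z) with h | h
      · rw [h, if_neg (by decide)]; simp [moveTarget]
      · rw [h, if_pos rfl]; simp [moveTarget, hz]
  · -- s = -1 : true-orientation view is the reversed Vloc
    have hVT : nodeView phi cfg w true = fun k => Vloc cfg w z (-k) := by
      funext k
      by_cases hk : |k| ≤ (phi:ℤ)
      · have hL : nodeView phi cfg w true k = colorsAt cfg (w + ((k:ℤ) : ZMod N)) := by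
          simp [nodeView, hk]
        rw [hL]
        rcases eq_or_ne k 0 with rfl | hk0
        · rw [show -(0:ℤ) = 0 by ring, Vloc_zero]; norm_num
        rcases eq_or_ne k (-1) with rfl | hk1
        · rw [show -(-1:ℤ) = 1 by ring, Vloc_one, hz]
        · rw [Vloc_other cfg w z (by omega) (by omega), hnotocc k hk0 hk1 hk]
      · have hL : nodeView phi cfg w true k = ∅ := by simp [nodeView, hk]
        have h0 : -k ≠ 0 := by
          intro h; exact hk (by rw [show k = 0 by omega, abs_zero]; omega)
        have h1 : -k ≠ 1 := by
          intro h; exact hk (by rw [show k = -1 by omega, abs_neg, abs_one]; omega)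
        rw [hL, Vloc_other cfg w z h0 h1]
    cases dir
    · -- dir = false : view is Vloc
      have hVF : nodeView phi cfg w false = Vloc cfg w z := by
        funext k
        have h : nodeView phi cfg w false k = nodeView phi cfg w true (-k) := by
          simp [nodeView, abs_neg]
        rw [h, hVT]; simp
      rw [hVF, algo1_out_pos hphi cfg w z hznon]
      refine ⟨rfl, ?_⟩
      rcases rules_snd (phi := phi) c (Vloc cfg w z) with h | h
      · rw [h, if_neg (by decide)]; simp [moveTarget]
      · rw [h, if_pos rfl]; simp [moveTarget, hz]
    · -- dir = true
      rw [hVT, algo1_out_neg hphi cfg w z hznon]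
      refine ⟨rfl, ?_⟩
      rcases rules_snd (phi := phi) c (Vloc cfg w z) with h | h
      · rw [h, if_neg (by decide)]; simp [moveTarget]
      · rw [h, if_pos rfl]; simp [moveTarget, hz]

private lemma out_alone (hN : 3 ≤ N) (hphi : 1 ≤ phi) (hpN : (phi:ℤ) + 2 ≤ (N:ℤ))
    (cfg : Config N R C3) (w : ZMod N)
    (hocc : ∀ x, occupiedNode cfg x → x = w) (c : C3) (dir : Bool) :
    ((algo1 phi).out c (nodeView phi cfg w dir)).1 = c ∧
    moveTarget w dir ((algo1 phi).out c (nodeView phi cfg w dir)).2 = w := by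
  have hemp : ∀ j : ℤ, j ≠ 0 → |j| ≤ (phi:ℤ) →
      colorsAt cfg (w + ((j:ℤ) : ZMod N)) = ∅ := by
    intro j hj0 hj
    rw [colorsAt_empty_iff]
    intro hoc
    have h := hocc _ hoc
    have hc0 : ((j:ℤ) : ZMod N) = 0 := by rwa [add_eq_left] at h
    exact castZ_ne_zero hN hj0 (by omega) hc0
  have hview : ∀ k : ℤ, 1 ≤ k → k ≤ (phi:ℤ) →
      nodeView phi cfg w dir k = ∅ ∧ nodeView phi cfg w dir (-k) = ∅ := by
    intro k hk1 hk2
    have hk : |k| ≤ (phi:ℤ) := by rw [abs_of_nonneg (by omega)]; omega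
    have hkn : |(-k : ℤ)| ≤ (phi:ℤ) := by rwa [abs_neg]
    cases dir <;> constructor <;>
      simp only [nodeView, if_pos hk, if_pos hkn, if_true, if_false, Bool.false_eq_true,
        ite_true, ite_false] <;>
      first
        | exact hemp k (by omega) hk
        | exact hemp (-k) (by omega) hkn
        | (rw [show (-(-k) : ℤ) = k by ring]; exact hemp k (by omega) hk)
  have hcond : (∀ k : ℤ, 1 ≤ k → k ≤ (phi:ℤ) → nodeView phi cfg w dir (-k) = ∅) ∧
      (∀ k : ℤ, 1 ≤ k → k ≤ (phi:ℤ) → nodeView phi cfg w dir k = ∅) :=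
    ⟨fun k a b => (hview k a b).2, fun k a b => (hview k a b).1⟩
  have hout : (algo1 phi).out c (nodeView phi cfg w dir) = (c, 0) := by
    simp only [algo1]
    rw [if_pos hcond]
  rw [hout]
  exact ⟨rfl, by cases dir <;> simp [moveTarget]⟩
private def uCl (e : AsyncExec N R C3 phi (algo1 phi)) (u : ZMod N) (t : ℕ) (r : Fin R) :
    Prop :=
  ((e.cfg t).light r = C3.White ∨ (e.cfg t).light r = C3.Blue) ∧
  (e.plan t r = none ∨ e.plan t r = some (C3.Blue, u) ∨
    ((e.cfg t).light r = C3.White ∧ e.plan t r = some (C3.White, u)))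

private def vCl (e : AsyncExec N R C3 phi (algo1 phi)) (u v : ZMod N) (t : ℕ) (r : Fin R) :
    Prop :=
  ((e.cfg t).light r = C3.Red ∨ (e.cfg t).light r = C3.Blue) ∧
  (e.plan t r = none ∨ e.plan t r = some (C3.Blue, u) ∨ e.plan t r = some (C3.Red, v)) ∧
  ((e.cfg t).light r = C3.Blue → e.plan t r = some (C3.Blue, u))

private def Inv (e : AsyncExec N R C3 phi (algo1 phi)) (u v : ZMod N) (t : ℕ) : Prop :=
  (∀ r, (e.cfg t).pos r = u ∨ (e.cfg t).pos r = v) ∧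
  (∀ r, (e.cfg t).pos r = u → uCl e u t r) ∧
  (∃ r, (e.cfg t).pos r = u ∧ (e.cfg t).light r = C3.Blue) ∧
  (∀ r, (e.cfg t).pos r = v → vCl e u v t r)

private lemma inv_key (hN : 3 ≤ N) (hphi : 1 ≤ phi) (hpN : (phi:ℤ) + 2 ≤ (N:ℤ))
    (e : AsyncExec N R C3 phi (algo1 phi)) (u v : ZMod N) (s : ℤ)
    (hs : s = 1 ∨ s = -1) (hv : v = u + ((s:ℤ) : ZMod N)) (huv : u ≠ v)
    (t : ℕ) (h : Inv e u v t) (r : Fin R) :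
    ((e.cfg (t+1)).pos r = (e.cfg t).pos r ∨
      ((e.cfg t).pos r = v ∧ (e.cfg (t+1)).pos r = u)) ∧
    ((e.cfg (t+1)).pos r = u → uCl e u (t+1) r) ∧
    ((e.cfg (t+1)).pos r = v → vCl e u v (t+1) r) ∧
    ((e.cfg t).pos r = u → (e.cfg t).light r = C3.Blue →
      (e.cfg (t+1)).pos r = u ∧ (e.cfg (t+1)).light r = C3.Blue) := by
  obtain ⟨hpos, hu, hB, hvl⟩ := h
  have hocc : ∀ x, occupiedNode (e.cfg t) x → x = u ∨ x = v := by
    rintro x ⟨r', hr'⟩; exact hr' ▸ hpos r'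
  have hWu : ∀ x ∈ colorsAt (e.cfg t) u, x = C3.White ∨ x = C3.Blue := by
    rintro x ⟨r', hr', rfl⟩; exact (hu r' hr').1
  have hZv : ∀ x ∈ colorsAt (e.cfg t) v, x = C3.Red ∨ x = C3.Blue := by
    rintro x ⟨r', hr', rfl⟩; exact (hvl r' hr').1
  have hBmem : C3.Blue ∈ colorsAt (e.cfg t) u := by
    obtain ⟨rb, hrb, hrbB⟩ := hB; exact ⟨rb, hrb, hrbB⟩
  have huocc : occupiedNode (e.cfg t) u := by
    obtain ⟨rb, hrb, -⟩ := hB; exact ⟨rb, hrb⟩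
  rcases hpos r with hru | hrv
  · -- robot at u
    have huC := hu r hru
    rcases e.step t r with ⟨hp, hl, hpl⟩ | ⟨hpn, hp, hl, dir, hpl⟩ |
      ⟨c, w', hpc, hp, hl, hpl⟩ | ⟨c, w', hpc, hp, hl, hpl⟩
    · refine ⟨Or.inl hp, ?_, ?_, ?_⟩
      · intro _
        unfold uCl at huC ⊢
        rw [hl, hpl]; exact huC
      · intro hv'; rw [hp, hru] at hv'; exact absurd hv' huv
      · intro _ hbl; exact ⟨by rw [hp, hru], by rw [hl]; exact hbl⟩
    · -- Look at u
      rw [hru] at hpl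
      by_cases hvo : occupiedNode (e.cfg t) v
      · have hev := out_eval hN hphi hpN (e.cfg t) u v s hs hv hocc hvo
          ((e.cfg t).light r) dir
        have hrules := rulesAtU (phi := phi) (e.cfg t) u v _ huC.1 hBmem hWu hZv
        rw [hev.1, hev.2, hrules] at hpl
        rw [if_neg (by decide : ¬ ((C3.Blue, (0 : SignType)).2 = 1))] at hpl
        have hpl' : e.plan (t+1) r = some (C3.Blue, u) := hpl
        refine ⟨Or.inl hp, ?_, ?_, ?_⟩
        · intro _
          exact ⟨by rw [hl]; exact huC.1, Or.inr (Or.inl hpl')⟩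
        · intro hv'; rw [hp, hru] at hv'; exact absurd hv' huv
        · intro _ hbl; exact ⟨by rw [hp, hru], by rw [hl]; exact hbl⟩
      · have hocc2 : ∀ x, occupiedNode (e.cfg t) x → x = u := by
          intro x hx
          rcases hocc x hx with h' | h'
          · exact h'
          · exact absurd (h' ▸ hx) hvo
        have hev := out_alone hN hphi hpN (e.cfg t) u hocc2 ((e.cfg t).light r) dir
        rw [hev.1, hev.2] at hpl
        refine ⟨Or.inl hp, ?_, ?_, ?_⟩
        · intro _
          refine ⟨by rw [hl]; exact huC.1, ?_⟩
          rcases huC.1 with hw | hb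
          · exact Or.inr (Or.inr ⟨by rw [hl]; exact hw, by rw [hpl, hw]⟩)
          · exact Or.inr (Or.inl (by rw [hpl, hb]))
        · intro hv'; rw [hp, hru] at hv'; exact absurd hv' huv
        · intro _ hbl; exact ⟨by rw [hp, hru], by rw [hl]; exact hbl⟩
    · -- Phase at u
      rcases huC.2 with hn | hsome | ⟨hwl, hsome⟩
      · rw [hn] at hpc; simp at hpc
      · have h2 := hpc.symm.trans hsome
        simp only [Option.some.injEq, Prod.mk.injEq] at h2
        obtain ⟨rfl, rfl⟩ := h2
        refine ⟨Or.inl hp, ?_, ?_, ?_⟩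
        · intro _; exact ⟨Or.inr hl, Or.inr (Or.inl hpl)⟩
        · intro hv'; rw [hp, hru] at hv'; exact absurd hv' huv
        · intro _ _; exact ⟨by rw [hp, hru], hl⟩
      · have h2 := hpc.symm.trans hsome
        simp only [Option.some.injEq, Prod.mk.injEq] at h2
        obtain ⟨rfl, rfl⟩ := h2
        refine ⟨Or.inl hp, ?_, ?_, ?_⟩
        · intro _; exact ⟨Or.inl hl, Or.inr (Or.inr ⟨hl, hpl⟩)⟩
        · intro hv'; rw [hp, hru] at hv'; exact absurd hv' huv
        · intro _ hbl; exact absurd (hwl.symm.trans hbl) (by decide)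
    · -- Move at u
      rcases huC.2 with hn | hsome | ⟨hwl, hsome⟩
      · rw [hn] at hpc; simp at hpc
      · have h2 := hpc.symm.trans hsome
        simp only [Option.some.injEq, Prod.mk.injEq] at h2
        obtain ⟨rfl, rfl⟩ := h2
        refine ⟨Or.inl (by rw [hp, hru]), ?_, ?_, ?_⟩
        · intro _; exact ⟨Or.inr hl, Or.inl hpl⟩
        · intro hv'; rw [hp] at hv'; exact absurd hv' huv
        · intro _ _; exact ⟨hp, hl⟩
      · have h2 := hpc.symm.trans hsome
        simp only [Option.some.injEq, Prod.mk.injEq] at h2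
        obtain ⟨rfl, rfl⟩ := h2
        refine ⟨Or.inl (by rw [hp, hru]), ?_, ?_, ?_⟩
        · intro _; exact ⟨Or.inl hl, Or.inl hpl⟩
        · intro hv'; rw [hp] at hv'; exact absurd hv' huv
        · intro _ hbl; exact absurd (hwl.symm.trans hbl) (by decide)
  · -- robot at v
    have hvC := hvl r hrv
    rcases e.step t r with ⟨hp, hl, hpl⟩ | ⟨hpn, hp, hl, dir, hpl⟩ |
      ⟨c, w', hpc, hp, hl, hpl⟩ | ⟨c, w', hpc, hp, hl, hpl⟩
    · refine ⟨Or.inl hp, ?_, ?_, ?_⟩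
      · intro hu'; rw [hp, hrv] at hu'; exact absurd hu'.symm huv
      · intro _; unfold vCl at hvC ⊢; rw [hl, hpl]; exact hvC
      · intro hu' _; rw [hrv] at hu'; exact absurd hu'.symm huv
    · -- Look at v
      have hlr : (e.cfg t).light r = C3.Red := by
        rcases hvC.1 with h' | h'
        · exact h'
        · exfalso; have := hvC.2.2 h'; rw [hpn] at this; simp at this
      have hs' : (-s : ℤ) = 1 ∨ (-s : ℤ) = -1 := by
        rcases hs with rfl | rfl
        · exact Or.inr rfl
        · exact Or.inl (by ring)
      have hz' : u = v + (((-s : ℤ) : ℤ) : ZMod N) := by rw [hv]; push_cast; ring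
      have hocc' : ∀ x, occupiedNode (e.cfg t) x → x = v ∨ x = u := fun x hx =>
        (hocc x hx).symm
      rw [hrv, hlr] at hpl
      have hev := out_eval hN hphi hpN (e.cfg t) v u (-s) hs' hz' hocc' huocc C3.Red dir
      rw [hev.1, hev.2] at hpl
      rcases rulesAtV_cases (phi := phi) (e.cfg t) v u with hr1 | hr1 <;> rw [hr1] at hpl
      · rw [if_pos (by decide : (C3.Blue, (1 : SignType)).2 = 1)] at hpl
        have hpl' : e.plan (t+1) r = some (C3.Blue, u) := hpl
        refine ⟨Or.inl hp, ?_, ?_, ?_⟩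
        · intro hu'; rw [hp, hrv] at hu'; exact absurd hu'.symm huv
        · intro _
          refine ⟨Or.inl (by rw [hl]; exact hlr), Or.inr (Or.inl hpl'), ?_⟩
          intro hbl; rw [hl] at hbl; exact absurd (hlr.symm.trans hbl) (by decide)
        · intro hu' _; rw [hrv] at hu'; exact absurd hu'.symm huv
      · rw [if_neg (by decide : ¬ ((C3.Red, (0 : SignType)).2 = 1))] at hpl
        have hpl' : e.plan (t+1) r = some (C3.Red, v) := hpl
        refine ⟨Or.inl hp, ?_, ?_, ?_⟩
        · intro hu'; rw [hp, hrv] at hu'; exact absurd hu'.symm huv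
        · intro _
          refine ⟨Or.inl (by rw [hl]; exact hlr), Or.inr (Or.inr hpl'), ?_⟩
          intro hbl; rw [hl] at hbl; exact absurd (hlr.symm.trans hbl) (by decide)
        · intro hu' _; rw [hrv] at hu'; exact absurd hu'.symm huv
    · -- Phase at v
      rcases hvC.2.1 with hn | hsome | hsome
      · rw [hn] at hpc; simp at hpc
      · have h2 := hpc.symm.trans hsome
        simp only [Option.some.injEq, Prod.mk.injEq] at h2
        obtain ⟨rfl, rfl⟩ := h2
        refine ⟨Or.inl hp, ?_, ?_, ?_⟩
        · intro hu'; rw [hp, hrv] at hu'; exact absurd hu'.symm huv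
        · intro _; exact ⟨Or.inr hl, Or.inr (Or.inl hpl), fun _ => hpl⟩
        · intro hu' _; rw [hrv] at hu'; exact absurd hu'.symm huv
      · have h2 := hpc.symm.trans hsome
        simp only [Option.some.injEq, Prod.mk.injEq] at h2
        obtain ⟨rfl, rfl⟩ := h2
        refine ⟨Or.inl hp, ?_, ?_, ?_⟩
        · intro hu'; rw [hp, hrv] at hu'; exact absurd hu'.symm huv
        · intro _
          exact ⟨Or.inl hl, Or.inr (Or.inr hpl),
            fun hbl => absurd (hl.symm.trans hbl) (by decide)⟩
        · intro hu' _; rw [hrv] at hu'; exact absurd hu'.symm huv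
    · -- Move at v
      rcases hvC.2.1 with hn | hsome | hsome
      · rw [hn] at hpc; simp at hpc
      · have h2 := hpc.symm.trans hsome
        simp only [Option.some.injEq, Prod.mk.injEq] at h2
        obtain ⟨rfl, rfl⟩ := h2
        refine ⟨Or.inr ⟨hrv, hp⟩, ?_, ?_, ?_⟩
        · intro _; exact ⟨Or.inr hl, Or.inl hpl⟩
        · intro hv'; rw [hp] at hv'; exact absurd hv' huv
        · intro hu' _; rw [hrv] at hu'; exact absurd hu'.symm huv
      · have h2 := hpc.symm.trans hsome
        simp only [Option.some.injEq, Prod.mk.injEq] at h2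
        obtain ⟨rfl, rfl⟩ := h2
        refine ⟨Or.inl (by rw [hp, hrv]), ?_, ?_, ?_⟩
        · intro hu'; rw [hp] at hu'; exact absurd hu'.symm huv
        · intro _; exact ⟨Or.inl hl, Or.inl hpl,
            fun hbl => absurd (hl.symm.trans hbl) (by decide)⟩
        · intro hu' _; rw [hrv] at hu'; exact absurd hu'.symm huv

private lemma inv_step (hN : 3 ≤ N) (hphi : 1 ≤ phi) (hpN : (phi:ℤ) + 2 ≤ (N:ℤ))
    (e : AsyncExec N R C3 phi (algo1 phi)) (u v : ZMod N) (s : ℤ)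
    (hs : s = 1 ∨ s = -1) (hv : v = u + ((s:ℤ) : ZMod N)) (huv : u ≠ v)
    (t : ℕ) (h : Inv e u v t) : Inv e u v (t+1) := by
  have hpos := h.1
  have hB := h.2.2.1
  refine ⟨?_, ?_, ?_, ?_⟩
  · intro r
    rcases (inv_key hN hphi hpN e u v s hs hv huv t h r).1 with h' | h'
    · rw [h']; exact hpos r
    · exact Or.inl h'.2
  · intro r; exact (inv_key hN hphi hpN e u v s hs hv huv t h r).2.1
  · obtain ⟨rb, h1, h2⟩ := hB
    obtain ⟨h3, h4⟩ := (inv_key hN hphi hpN e u v s hs hv huv t h rb).2.2.2 h1 h2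
    exact ⟨rb, h3, h4⟩
  · intro r; exact (inv_key hN hphi hpN e u v s hs hv huv t h r).2.2.1

private lemma stickU (hN : 3 ≤ N) (hphi : 1 ≤ phi) (hpN : (phi:ℤ) + 2 ≤ (N:ℤ))
    (e : AsyncExec N R C3 phi (algo1 phi)) (u v : ZMod N) (s : ℤ)
    (hs : s = 1 ∨ s = -1) (hv : v = u + ((s:ℤ) : ZMod N)) (huv : u ≠ v)
    (t : ℕ) (h : Inv e u v t) (r : Fin R) (hru : (e.cfg t).pos r = u) :
    (e.cfg (t+1)).pos r = u := by
  rcases (inv_key hN hphi hpN e u v s hs hv huv t h r).1 with h' | h'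
  · rw [h', hru]
  · exact absurd (hru.symm.trans h'.1) huv
private lemma plan_persist (e : AsyncExec N R C3 phi (algo1 phi)) (r : Fin R) (t : ℕ)
    (p : C3 × ZMod N) (h : e.plan t r = some p) :
    e.plan (t+1) r = some p ∨
      ((e.cfg (t+1)).pos r = p.2 ∧ (e.cfg (t+1)).light r = p.1 ∧ e.plan (t+1) r = none) := by
  rcases e.step t r with ⟨-, -, hpl⟩ | ⟨hpn, -⟩ | ⟨c, w', hpc, -, -, hpl⟩ |
    ⟨c, w', hpc, hp, hl, hpl⟩
  · exact Or.inl (hpl.trans h)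
  · rw [hpn] at h; simp at h
  · rw [h] at hpc
    simp only [Option.some.injEq] at hpc
    exact Or.inl (by rw [hpl, ← hpc])
  · rw [h] at hpc
    simp only [Option.some.injEq] at hpc
    refine Or.inr ⟨?_, ?_, hpl⟩
    · rw [hp, hpc]
    · rw [hl, hpc]

private lemma plan_completes (e : AsyncExec N R C3 phi (algo1 phi)) (r : Fin R) (t : ℕ)
    (p : C3 × ZMod N) (h : e.plan t r = some p) :
    ∃ s2, t < s2 ∧ (e.cfg s2).pos r = p.2 ∧ (e.cfg s2).light r = p.1 := by
  obtain ⟨t1, ht1, hp1, hq1⟩ := e.fair r t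
  have aux : ∀ k, e.plan (t+k) r = some p ∨
      ∃ s2, t < s2 ∧ s2 ≤ t+k ∧ (e.cfg s2).pos r = p.2 ∧ (e.cfg s2).light r = p.1 := by
    intro k
    induction k with
    | zero => exact Or.inl h
    | succ k ih =>
      rcases ih with hk | ⟨s2, h1, h2, h3, h4⟩
      · rcases plan_persist e r (t+k) p hk with h' | ⟨h1, h2, -⟩
        · exact Or.inl h'
        · exact Or.inr ⟨t+k+1, by omega, by omega, h1, h2⟩
      · exact Or.inr ⟨s2, h1, by omega, h3, h4⟩
  rcases aux (t1+1-t) with hk | ⟨s2, h1, h2, h3, h4⟩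
  · rw [show t + (t1+1-t) = t1+1 by omega] at hk
    rw [hq1] at hk; simp at hk
  · exact ⟨s2, h1, h3, h4⟩

private lemma none_between (e : AsyncExec N R C3 phi (algo1 phi)) (r : Fin R) :
    ∀ b a, a ≤ b → e.plan a r = none → e.plan b r ≠ none →
      ∃ s, a ≤ s ∧ e.plan s r = none ∧ e.plan (s+1) r ≠ none := by
  intro b
  induction b with
  | zero =>
    intro a ha h0 hne
    rw [show a = 0 by omega] at h0
    exact absurd h0 hne
  | succ b ih =>
    intro a ha h0 hne
    have hab : a ≤ b := by
      rcases Nat.lt_or_ge a (b+1) with h' | h'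
      · omega
      · rw [show a = b + 1 by omega] at h0; exact absurd h0 hne
    by_cases hb : e.plan b r = none
    · exact ⟨b, hab, hb, hne⟩
    · exact ih a hab h0 hb

private lemma look_after (e : AsyncExec N R C3 phi (algo1 phi)) (r : Fin R) (t : ℕ) :
    ∃ s1, t ≤ s1 ∧ e.plan s1 r = none ∧
      (e.cfg (s1+1)).pos r = (e.cfg s1).pos r ∧
      (e.cfg (s1+1)).light r = (e.cfg s1).light r ∧
      ∃ dir : Bool,
        e.plan (s1+1) r =
          some (((algo1 phi).out ((e.cfg s1).light r)
              (nodeView phi (e.cfg s1) ((e.cfg s1).pos r) dir)).1,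
            moveTarget ((e.cfg s1).pos r) dir
              ((algo1 phi).out ((e.cfg s1).light r)
                (nodeView phi (e.cfg s1) ((e.cfg s1).pos r) dir)).2) := by
  obtain ⟨t1, ht1, hp1, hq1⟩ := e.fair r t
  obtain ⟨t2, ht2, hp2, -⟩ := e.fair r (t1+1)
  obtain ⟨s, hs1, hsn, hsn'⟩ := none_between e r t2 (t1+1) ht2 hq1 hp2
  rcases e.step s r with ⟨-, -, hpl⟩ | ⟨-, hp, hl, dir, hpl⟩ | ⟨c, w', hpc, -⟩ |
    ⟨c, w', hpc, -⟩
  · exact absurd (hpl.trans hsn) hsn'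
  · exact ⟨s, by omega, hsn, hp, hl, dir, hpl⟩
  · rw [hsn] at hpc; simp at hpc
  · rw [hsn] at hpc; simp at hpc
end Lem7
/-- **Lemma 7.** Under Algorithm 1, from configuration `Conf BW-MR` the
execution achieves gathering: all robots eventually occupy a single node and
remain there forever. -/
theorem algo1_gathers_from_BWMR
    (N R phi Minit Oinit : ℕ) (hN : 3 ≤ N) (hphi : 1 ≤ phi) (hM : Odd Minit)
    (e : AsyncExec N R C3 phi (algo1 phi))
    (hInit : AdmissibleInit phi (e.cfg 0) C3.White Minit Oinit)
    (t0 : ℕ) (hconf : ConfBWMR e t0) :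
    ∃ (t1 : ℕ) (u : ZMod N), t0 ≤ t1 ∧
      ∀ t', t1 ≤ t' → ∀ r, (e.cfg t').pos r = u := by
  classical
  obtain ⟨u, v, hadj, hbu, hbv, hoccUV, hUr, hBu, hVr, hRv⟩ := hconf
  obtain ⟨s, hs, hv⟩ : ∃ s : ℤ, (s = 1 ∨ s = -1) ∧ v = u + ((s:ℤ) : ZMod N) := by
    rcases hadj with h | h
    · exact ⟨1, Or.inl rfl, by rw [h]; norm_num⟩
    · exact ⟨-1, Or.inr rfl, by rw [h]; push_cast; ring⟩
  have habs1 : |s| = 1 := by rcases hs with rfl | rfl <;> simp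
  have huv : u ≠ v := by
    intro h
    rw [hv, left_eq_add] at h
    refine castZ_ne_zero hN ?_ ?_ h
    · rcases hs with rfl | rfl <;> norm_num
    · rw [habs1]; exact_mod_cast (by omega : (1:ℕ) < N)
  have hvocc : occupiedNode (e.cfg t0) v := hbv.1
  have hpN : (phi:ℤ) + 2 ≤ (N:ℤ) := by
    by_contra hcon
    push_neg at hcon
    obtain ⟨-, dir, hemp, -⟩ := hbu
    have h1 := hemp 1 le_rfl (by omega)
    have h2 := hemp ((N:ℤ) - 1) (by omega) (by omega)
    cases dir
    · rcases hs with rfl | rfl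
      · apply h2
        convert hvocc using 2
        rw [hv]; push_cast [ZMod.natCast_self]; ring
      · apply h1
        convert hvocc using 2
        rw [hv]; push_cast; ring
    · rcases hs with rfl | rfl
      · apply h1
        convert hvocc using 2
        rw [hv]; push_cast; simp only [if_true]
      · apply h2
        convert hvocc using 2
        rw [hv]; push_cast [ZMod.natCast_self]; simp only [if_true]; ring
  have hInv0 : Inv e u v t0 := by
    refine ⟨?_, ?_, ?_, ?_⟩
    · intro r; exact hoccUV _ ⟨r, rfl⟩
    · intro r hr
      obtain ⟨hl, hpn⟩ := hUr r hr
      exact ⟨hl.symm, Or.inl hpn⟩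
    · exact hBu
    · intro r hr
      obtain ⟨hl, hpn, himp⟩ := hVr r hr
      refine ⟨hl, ?_, ?_⟩
      · rcases hpn with h | h
        · exact Or.inl h
        · exact Or.inr (Or.inl h)
      · intro hbl
        rcases hpn with h | h
        · exact absurd ((himp h).symm.trans hbl) (by decide)
        · exact h
  have hInvAll : ∀ t, t0 ≤ t → Inv e u v t := by
    intro t ht
    induction t, ht using Nat.le_induction with
    | base => exact hInv0
    | succ n hn ih => exact inv_step hN hphi hpN e u v s hs hv huv n ih
  by_cases hI : ∃ sg, t0 ≤ sg ∧ ∀ r, (e.cfg sg).pos r = u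
  · obtain ⟨sg, hsg, hall⟩ := hI
    refine ⟨sg, u, hsg, ?_⟩
    intro t' ht'
    induction t', ht' using Nat.le_induction with
    | base => exact hall
    | succ n hn ih =>
      intro r
      exact stickU hN hphi hpN e u v s hs hv huv n (hInvAll n (le_trans hsg hn)) r (ih r)
  · exfalso
    push_neg at hI
    have hII : ∀ t, t0 ≤ t → ∃ r, (e.cfg t).pos r = v := by
      intro t ht
      obtain ⟨r, hr⟩ := hI t ht
      rcases (hInvAll t ht).1 r with h | h
      · exact absurd h hr
      · exact ⟨r, h⟩
    set S : ℕ → Finset (Fin R) := fun t => Finset.univ.filter (fun r => (e.cfg t).pos r = u)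
      with hS
    have hmono : ∀ t, t0 ≤ t → S t ⊆ S (t+1) := by
      intro t ht r hr
      simp only [hS, Finset.mem_filter, Finset.mem_univ, true_and] at hr ⊢
      exact stickU hN hphi hpN e u v s hs hv huv t (hInvAll t ht) r hr
    have hmono' : ∀ a b, t0 ≤ a → a ≤ b → S a ⊆ S b := by
      intro a b ha hab
      induction b, hab using Nat.le_induction with
      | base => exact subset_rfl
      | succ n hn ih => exact ih.trans (hmono n (by omega))
    have hbound : ∀ t, (S t).card ≤ R := by
      intro t
      refine (Finset.card_filter_le _ _).trans ?_
      simp [Finset.card_univ]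
    have hconstT : ∃ T, t0 ≤ T ∧ ∀ b, T ≤ b → S b = S T := by
      by_contra hc
      push_neg at hc
      have grow : ∀ n, ∃ T, t0 ≤ T ∧ n ≤ (S T).card := by
        intro n
        induction n with
        | zero => exact ⟨t0, le_rfl, Nat.zero_le _⟩
        | succ n ih =>
          obtain ⟨T, hT, hcard⟩ := ih
          obtain ⟨b, hb, hne⟩ := hc T hT
          have hsub := hmono' T b hT hb
          have hlt : (S T).card < (S b).card :=
            Finset.card_lt_card (Finset.ssubset_iff_subset_ne.mpr ⟨hsub, fun h => hne h.symm⟩)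
          exact ⟨b, le_trans hT hb, by omega⟩
      obtain ⟨T, -, hcard⟩ := grow (R+1)
      have := hbound T; omega
    obtain ⟨T, hT0, hTconst⟩ := hconstT
    have hposconst : ∀ t, T ≤ t → ∀ r, (e.cfg t).pos r = (e.cfg T).pos r := by
      intro t ht
      induction t, ht using Nat.le_induction with
      | base => intro r; rfl
      | succ n hn ih =>
        intro r
        rcases (hInvAll n (le_trans hT0 hn)).1 r with hru | hrv
        · have h1 : (e.cfg (n+1)).pos r = u :=
            stickU hN hphi hpN e u v s hs hv huv n (hInvAll n (le_trans hT0 hn)) r hru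
          rw [h1, ← hru]; exact ih r
        · rcases (hInvAll (n+1) (by omega)).1 r with h1 | h1
          · exfalso
            have hn1 : r ∈ S (n+1) := by
              simp only [hS, Finset.mem_filter, Finset.mem_univ, true_and]; exact h1
            have heq : S (n+1) = S n := by rw [hTconst (n+1) (by omega), hTconst n hn]
            rw [heq] at hn1
            simp only [hS, Finset.mem_filter, Finset.mem_univ, true_and] at hn1
            exact huv (hn1.symm.trans hrv)
          · rw [h1, ← hrv]; exact ih r
    have hnoplan : ∀ t, T ≤ t → ∀ r, (e.cfg t).pos r = v →
        e.plan t r ≠ some (C3.Blue, u) := by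
      intro t ht r hrv hplan
      obtain ⟨s2, hs2, hpos2, -⟩ := plan_completes e r t _ hplan
      have hcc : (e.cfg s2).pos r = (e.cfg t).pos r := by
        rw [hposconst s2 (by omega) r, hposconst t ht r]
      rw [hpos2, hrv] at hcc
      exact huv hcc
    have hRedv : ∀ t, T ≤ t → ∀ r, (e.cfg t).pos r = v → (e.cfg t).light r = C3.Red := by
      intro t ht r hrv
      have hvC := (hInvAll t (le_trans hT0 ht)).2.2.2 r hrv
      rcases hvC.1 with h | h
      · exact h
      · exact absurd (hvC.2.2 h) (hnoplan t ht r hrv)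
    have hstickB : ∀ t, t0 ≤ t → ∀ t', t ≤ t' → ∀ r, (e.cfg t).pos r = u →
        (e.cfg t).light r = C3.Blue →
        (e.cfg t').pos r = u ∧ (e.cfg t').light r = C3.Blue := by
      intro t ht t' htt'
      induction t', htt' using Nat.le_induction with
      | base => intro r h1 h2; exact ⟨h1, h2⟩
      | succ n hn ih =>
        intro r h1 h2
        obtain ⟨h3, h4⟩ := ih r h1 h2
        exact (inv_key hN hphi hpN e u v s hs hv huv n
          (hInvAll n (le_trans ht hn)) r).2.2.2 h3 h4
    have hWhiteDies : ∀ r : Fin R, ∃ sr, T ≤ sr ∧ ∀ t, sr ≤ t →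
        ((e.cfg t).pos r = u → (e.cfg t).light r = C3.Blue) := by
      intro r
      rcases (hInvAll T hT0).1 r with hru | hrv
      · obtain ⟨s1, hs1T, hs1n, hs1p, hs1l, dir, hs1pl⟩ := look_after e r T
        have hposu : (e.cfg s1).pos r = u := by rw [hposconst s1 hs1T r, hru]
        have hinv1 := hInvAll s1 (le_trans hT0 hs1T)
        have hvoc : occupiedNode (e.cfg s1) v := by
          obtain ⟨r', hr'⟩ := hII s1 (le_trans hT0 hs1T); exact ⟨r', hr'⟩
        have hocc1 : ∀ x, occupiedNode (e.cfg s1) x → x = u ∨ x = v := by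
          rintro x ⟨r', hr'⟩; exact hr' ▸ hinv1.1 r'
        have hWu : ∀ x ∈ colorsAt (e.cfg s1) u, x = C3.White ∨ x = C3.Blue := by
          rintro x ⟨r', hr', rfl⟩; exact (hinv1.2.1 r' hr').1
        have hZv : ∀ x ∈ colorsAt (e.cfg s1) v, x = C3.Red ∨ x = C3.Blue := by
          rintro x ⟨r', hr', rfl⟩; exact ((hInvAll s1 (le_trans hT0 hs1T)).2.2.2 r' hr').1
        have hBmem : C3.Blue ∈ colorsAt (e.cfg s1) u := by
          obtain ⟨rb, h1, h2⟩ := hinv1.2.2.1; exact ⟨rb, h1, h2⟩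
        have hev := out_eval hN hphi hpN (e.cfg s1) u v s hs hv hocc1 hvoc
          ((e.cfg s1).light r) dir
        have hrules := rulesAtU (phi := phi) (e.cfg s1) u v _
          (hinv1.2.1 r hposu).1 hBmem hWu hZv
        rw [hposu] at hs1pl
        rw [hev.1, hev.2, hrules,
          if_neg (by decide : ¬ ((C3.Blue, (0 : SignType)).2 = 1))] at hs1pl
        have hs1pl' : e.plan (s1+1) r = some (C3.Blue, u) := hs1pl
        obtain ⟨s2, hs2gt, hp2, hl2⟩ := plan_completes e r (s1+1) _ hs1pl'
        refine ⟨s2, by omega, ?_⟩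
        intro t htt _
        exact (hstickB s2 (le_trans hT0 (by omega)) t htt r hp2 hl2).2
      · refine ⟨T, le_rfl, ?_⟩
        intro t htt hru'
        exfalso
        rw [hposconst t htt r] at hru'
        exact huv (hru'.symm.trans hrv)
    choose sr hsr1 hsr2 using hWhiteDies
    set T' : ℕ := max T (Finset.univ.sup sr) with hT'
    have hT'T : T ≤ T' := le_max_left _ _
    have hsrT' : ∀ r, sr r ≤ T' := fun r =>
      le_trans (Finset.le_sup (Finset.mem_univ r)) (le_max_right _ _)
    obtain ⟨r0, hr0⟩ := hII T' (le_trans hT0 hT'T)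
    obtain ⟨s3, hs3T, hs3n, hs3p, hs3l, dir, hs3pl⟩ := look_after e r0 T'
    have hpos3 : (e.cfg s3).pos r0 = v := by
      rw [hposconst s3 (le_trans hT'T hs3T) r0, ← hposconst T' hT'T r0]; exact hr0
    have hinv3 := hInvAll s3 (le_trans hT0 (le_trans hT'T hs3T))
    have hlred : (e.cfg s3).light r0 = C3.Red := hRedv s3 (le_trans hT'T hs3T) r0 hpos3
    have hcv : colorsAt (e.cfg s3) v = {C3.Red} := by
      ext c
      simp only [Set.mem_singleton_iff]
      constructor
      · rintro ⟨r', hr', rfl⟩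
        exact hRedv s3 (le_trans hT'T hs3T) r' hr'
      · rintro rfl
        exact ⟨r0, hpos3, hlred⟩
    have hcu : colorsAt (e.cfg s3) u = {C3.Blue} := by
      ext c
      simp only [Set.mem_singleton_iff]
      constructor
      · rintro ⟨r', hr', rfl⟩
        exact hsr2 r' s3 (le_trans (hsrT' r') hs3T) hr'
      · rintro rfl
        obtain ⟨rb, h1, h2⟩ := hinv3.2.2.1
        exact ⟨rb, h1, h2⟩
    have hocc3 : ∀ x, occupiedNode (e.cfg s3) x → x = v ∨ x = u := by
      rintro x ⟨r', hr'⟩; exact (hr' ▸ hinv3.1 r').symm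
    have huocc3 : occupiedNode (e.cfg s3) u := by
      obtain ⟨rb, h1, -⟩ := hinv3.2.2.1; exact ⟨rb, h1⟩
    have hs' : (-s : ℤ) = 1 ∨ (-s : ℤ) = -1 := by
      rcases hs with rfl | rfl
      · exact Or.inr rfl
      · exact Or.inl (by ring)
    have hz' : u = v + (((-s : ℤ) : ℤ) : ZMod N) := by rw [hv]; push_cast; ring
    rw [hpos3, hlred] at hs3pl
    have hev := out_eval hN hphi hpN (e.cfg s3) v u (-s) hs' hz' hocc3 huocc3 C3.Red dir
    rw [hev.1, hev.2, rulesAtV_fire (phi := phi) (e.cfg s3) v u hcv hcu,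
      if_pos (by decide : (C3.Blue, (1 : SignType)).2 = 1)] at hs3pl
    have hfin : e.plan (s3+1) r0 = some (C3.Blue, u) := hs3pl
    have hpos31 : (e.cfg (s3+1)).pos r0 = v := by rw [hs3p]; exact hpos3
    exact hnoplan (s3+1) (by omega) r0 hpos31 hfin

end Gathering
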